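/- Conversely, if a time-varying finite state system x(k+1) = F(k, x(k)) on a finite set V is periodic of period N and every solution (from every initial time and initial condition) is periodic, then for each k the map x ↦ F(k, x) is injective. -/
import Mathlib

theorem tvfss_all_solutions_periodic_imp_nonsingular
    (V : Type*) [Fintype V] (F : ℕ → V → V) (N : ℕ) (hN : 0 < N)
    (hper : ∀ k x, F (k + N) x = F k x)
    (hsol : ∀ (k₀ : ℕ) (x : ℕ → V), (∀ k ≥ k₀, x (k + 1) = F k (x k)) →
      ∃ T > 0, ∀ k ≥ k₀, x (k + T) = x k) :
    ∀ k, Function.Injective (F k) := by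
  intro k a b hab
  -- trajectories starting at time k
  let traj : V → ℕ → V := fun v j => Nat.rec v (fun n y => F (k + n) y) (j - k)
  have htraj0 : ∀ v, traj v k = v := by
    intro v; simp [traj]
  have htraj : ∀ v, ∀ j ≥ k, traj v (j + 1) = F j (traj v j) := by
    intro v j hj
    have h1 : j + 1 - k = (j - k) + 1 := by omega
    have h2 : k + (j - k) = j := by omega
    simp only [traj, h1]
    rw [h2]
  obtain ⟨Ta, hTa, hpa⟩ := hsol k (traj a) (htraj a)
  obtain ⟨Tb, hTb, hpb⟩ := hsol k (traj b) (htraj b)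
  -- iterated periodicity
  have hiter : ∀ (v : V) (T : ℕ), (∀ j ≥ k, traj v (j + T) = traj v j) →
      ∀ m, traj v (k + m * T) = v := by
    intro v T hp m
    induction m with
    | zero => simpa using htraj0 v
    | succ m ih =>
        have : k + (m + 1) * T = (k + m * T) + T := by ring
        rw [this, hp (k + m * T) (by omega), ih]
  -- the two trajectories agree from time k+1 on
  have hagree : ∀ n, traj a (k + 1 + n) = traj b (k + 1 + n) := by
    intro n
    induction n with
    | zero =>
        simpa [htraj a k le_rfl, htraj b k le_rfl, htraj0, hab] using rfl
    | succ n ih =>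
        have h1 := htraj a (k + 1 + n) (by omega)
        have h2 := htraj b (k + 1 + n) (by omega)
        have e : k + 1 + (n + 1) = (k + 1 + n) + 1 := by omega
        rw [e, h1, h2, ih]
  have hpos : 1 ≤ Ta * Tb := Nat.one_le_iff_ne_zero.mpr (by positivity)
  have ea : traj a (k + Tb * Ta) = a := hiter a Ta hpa Tb
  have eb : traj b (k + Ta * Tb) = b := hiter b Tb hpb Ta
  have e1 : k + Ta * Tb = k + 1 + (Ta * Tb - 1) := by omega
  have e2 : k + Tb * Ta = k + Ta * Tb := by ring
  calc a = traj a (k + Ta * Tb) := by rw [← e2, ea]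
    _ = traj b (k + Ta * Tb) := by rw [e1]; exact hagree _
    _ = b := eb
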